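/- For every integer k ≥ 1 and every x ∈ [0,1], G_k(x) = (4√2/(2k+1))·(1−x)^{3/2} + (2(k−1)/(2k+1))·(2x−1)·G_{k−1}(x). -/

import Mathlib

open MeasureTheory

/-- `G_k(x) = ∫_{2x-1}^{1} t^{k-1} √(1 + t - 2x) dt` for `k ≥ 1`, with `G₀ ≡ 0`. -/
noncomputable def G : ℕ → ℝ → ℝ
  | 0, _ => 0
  | (k + 1), x => ∫ t in (2 * x - 1)..1, t ^ k * Real.sqrt (1 + t - 2 * x)

/-- The recursion
`G_k(x) = (4√2/(2k+1)) (1-x)^{3/2} + (2(k-1)/(2k+1)) (2x-1) G_{k-1}(x)`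
for all integers `k ≥ 1` and `x ∈ [0,1]`. -/
theorem G_recursion (k : ℕ) (hk : 1 ≤ k) (x : ℝ) (hx : x ∈ Set.Icc (0 : ℝ) 1) :
    G k x = 4 * Real.sqrt 2 / (2 * (k : ℝ) + 1) * (1 - x) ^ ((3 : ℝ) / 2)
      + 2 * ((k : ℝ) - 1) / (2 * (k : ℝ) + 1) * (2 * x - 1) * G (k - 1) x := by
  obtain ⟨hx0, hx1⟩ := hx
  set a : ℝ := 2 * x - 1 with ha
  have ha1 : a ≤ 1 := by simp [ha]; linarith
  -- continuity facts
  have c12 : Continuous fun t : ℝ => (t - a) ^ ((1:ℝ)/2) :=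
    (continuous_id.sub continuous_const).rpow_const (fun t => Or.inr (by norm_num))
  have c32 : Continuous fun t : ℝ => (t - a) ^ ((3:ℝ)/2) :=
    (continuous_id.sub continuous_const).rpow_const (fun t => Or.inr (by norm_num))
  have cmain : ∀ m : ℕ, Continuous fun t : ℝ => t ^ m * (t - a) ^ ((1:ℝ)/2) :=
    fun m => (continuous_pow m).mul c12
  -- FTC
  have ftc : ∀ m : ℕ, (∫ t in a..1,
      ((m:ℝ) * t^(m-1) * (t-a)^((3:ℝ)/2) + (3:ℝ)/2 * (t^m * (t-a)^((1:ℝ)/2))))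
      = (1-a)^((3:ℝ)/2) := by
    intro m
    have h := intervalIntegral.integral_eq_sub_of_hasDerivAt
      (f := fun t => t^m * (t-a)^((3:ℝ)/2))
      (f' := fun t => (m:ℝ) * t^(m-1) * (t-a)^((3:ℝ)/2) + (3:ℝ)/2 * (t^m * (t-a)^((1:ℝ)/2)))
      (a := a) (b := 1) ?_ ?_
    · rw [h]
      norm_num [Real.zero_rpow]
    · intro t _
      have h1 : HasDerivAt (fun t : ℝ => t ^ m) ((m:ℝ) * t^(m-1)) t := hasDerivAt_pow m t
      have h2 : HasDerivAt (fun t : ℝ => (t - a) ^ ((3:ℝ)/2))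
          (1 * ((3:ℝ)/2) * (t-a)^((3:ℝ)/2 - 1)) t :=
        ((hasDerivAt_id t).sub_const a).rpow_const (Or.inr (by norm_num))
      have := h1.fun_mul h2
      convert this using 1
      · rfl
      rw [show (3:ℝ)/2 - 1 = 1/2 by norm_num]
      ring
    · exact (((continuous_const.mul (continuous_pow _)).mul c32).add
        (continuous_const.mul (cmain m))).intervalIntegrable _ _
  -- rewrite G in rpow form
  have Grw : ∀ m : ℕ, G (m+1) x = ∫ t in a..1, t ^ m * (t - a) ^ ((1:ℝ)/2) := by
    intro m
    show (∫ t in (2*x-1)..1, t ^ m * Real.sqrt (1 + t - 2 * x)) = _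
    rw [← ha]
    refine intervalIntegral.integral_congr fun t _ => ?_
    rw [Real.sqrt_eq_rpow]
    congr 2
    rw [ha]; ring
  -- (1-a)^{3/2} = 2√2 (1-x)^{3/2}
  have key2 : (1 - a)^((3:ℝ)/2) = 2 * Real.sqrt 2 * (1-x)^((3:ℝ)/2) := by
    have h2x : (1:ℝ) - a = 2 * (1-x) := by rw [ha]; ring
    rw [h2x, Real.mul_rpow (by norm_num) (by linarith), Real.sqrt_eq_rpow,
      show (3:ℝ)/2 = 1 + 1/2 by norm_num, Real.rpow_add' (by norm_num) (by norm_num),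
      Real.rpow_one]
  obtain ⟨m, rfl⟩ : ∃ m, k = m + 1 := ⟨k - 1, (Nat.succ_pred_eq_of_pos hk).symm⟩
  rcases Nat.eq_zero_or_pos m with hm | hm
  · -- k = 1
    subst hm
    have h0 := ftc 0
    simp only [Nat.cast_zero, zero_mul, zero_add, pow_zero, one_mul,
      intervalIntegral.integral_const_mul] at h0
    have hG : G 1 x = ∫ t in a..1, (t - a) ^ ((1:ℝ)/2) := by
      have := Grw 0; simpa using this
    rw [hG, show (0 + 1 : ℕ) - 1 = 0 from rfl]
    simp only [G]
    push_cast
    rw [key2] at h0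
    nlinarith [Real.sq_sqrt (by norm_num : (2:ℝ) ≥ 0)]
  · obtain ⟨n, rfl⟩ : ∃ n, m = n + 1 := ⟨m - 1, (Nat.succ_pred_eq_of_pos hm).symm⟩
    -- k = n + 2
    have hftc := ftc (n+1)
    -- pointwise rewrite on [a,1]
    have hpt : ∀ t ∈ Set.uIcc a 1,
        ((n+1:ℕ):ℝ) * t^((n+1)-1) * (t-a)^((3:ℝ)/2) + (3:ℝ)/2 * (t^(n+1) * (t-a)^((1:ℝ)/2))
        = (((n:ℝ)+1) + 3/2) * (t^(n+1) * (t-a)^((1:ℝ)/2))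
          + (-(a * ((n:ℝ)+1))) * (t^n * (t-a)^((1:ℝ)/2)) := by
      intro t ht
      rw [Set.uIcc_of_le ha1] at ht
      have h32 : (t-a)^((3:ℝ)/2) = (t-a) * (t-a)^((1:ℝ)/2) := by
        rw [show (3:ℝ)/2 = 1 + 1/2 by norm_num,
          Real.rpow_add' (by linarith [ht.1]) (by norm_num), Real.rpow_one]
      rw [h32]
      push_cast
      ring
    rw [intervalIntegral.integral_congr hpt] at hftc
    rw [intervalIntegral.integral_add
        ((continuous_const.fun_mul (cmain (n+1))).intervalIntegrable _ _)
        ((continuous_const.fun_mul (cmain n)).intervalIntegrable _ _),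
      intervalIntegral.integral_const_mul, intervalIntegral.integral_const_mul,
      key2, ← Grw (n+1), ← Grw n] at hftc
    rw [show (n + 1 + 1 : ℕ) - 1 = n + 1 from rfl]
    push_cast
    have hne : 2 * ((n:ℝ) + 1 + 1) + 1 ≠ 0 := by positivity
    field_simp
    linear_combination (2 : ℝ) * hftc
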